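/- arXiv:2111.06542 — 2 statements merged into one kernel-verified Lean document; each statement's English description precedes it below -/
import Mathlib

section
/- Let n = p·q·l with gcd(p, q) = 1, and suppose λ, μ ∈ ℤ/nℤ have orders p and q respectively. Then there exists a generator τ of ℤ/nℤ (i.e., an integer τ coprime to n) such that λ = τ·q·l and μ = τ·p·l in ℤ/nℤ. -/
/-- If `x : ZMod n` has additive order `p` and `n = p * m`, then `x = a * m`
for some `a` coprime to `p`. -/
lemma stmt_3_aux {n p m : ℕ} (hp : 0 < p) (hm : 0 < m) (hn : n = p * m)
    (x : ZMod n) (hx : addOrderOf x = p) :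
    ∃ a : ℕ, Nat.Coprime p a ∧ x = ((a * m : ℕ) : ZMod n) := by
  have hn0 : n ≠ 0 := by subst hn; positivity
  haveI : NeZero n := ⟨hn0⟩
  have h1 : addOrderOf ((x.val : ℕ) : ZMod n) = p := by
    rw [ZMod.natCast_zmod_val]; exact hx
  rw [ZMod.addOrderOf_coe _ hn0] at h1
  set g := Nat.gcd n x.val with hg
  have hgd : g ∣ n := Nat.gcd_dvd_left _ _
  have hng : n = g * p := by
    have := (Nat.div_eq_iff_eq_mul_left (Nat.pos_of_ne_zero fun h => by
      simp [hg, Nat.gcd_eq_zero_iff] at h; exact hn0 h.1) hgd).mp h1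
    rw [this, Nat.mul_comm]
  have hgm : g = m := by
    have : g * p = m * p := by rw [← hng, hn]; ring
    exact Nat.eq_of_mul_eq_mul_right hp this
  have hmdvd : m ∣ x.val := hgm ▸ Nat.gcd_dvd_right n x.val
  obtain ⟨a, ha⟩ := hmdvd
  refine ⟨a, ?_, ?_⟩
  · have key : Nat.gcd p a * m = 1 * m := by
      rw [one_mul, ← Nat.gcd_mul_right, ← hn, mul_comm a m, ← ha, ← hg]
      exact hgm
    exact Nat.eq_of_mul_eq_mul_right hm key
  · rw [← ZMod.natCast_zmod_val x, ha, mul_comm m a]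

theorem stmt_3 (n p q l : ℕ) (hp : 0 < p) (hq : 0 < q) (hl : 0 < l)
    (hn : n = p * q * l) (hpq : Nat.gcd p q = 1)
    (lam mu : ZMod n) (hlam : addOrderOf lam = p) (hmu : addOrderOf mu = q) :
    ∃ τ : ℤ, Int.gcd τ n = 1 ∧
      lam = ((τ * q * l : ℤ) : ZMod n) ∧ mu = ((τ * p * l : ℤ) : ZMod n) := by
  have hn0 : n ≠ 0 := by subst hn; positivity
  haveI : NeZero n := ⟨hn0⟩
  obtain ⟨a, hap, hla⟩ := stmt_3_aux hp (Nat.mul_pos hq hl)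
    (by rw [hn, mul_assoc]) lam hlam
  obtain ⟨b, hbq, hmb⟩ := stmt_3_aux hq (Nat.mul_pos hp hl)
    (by rw [hn]; ring) mu hmu
  obtain ⟨c, hcp, hcq⟩ := Nat.chineseRemainder hpq a b
  have hcp' : Nat.Coprime c p := by
    have := hcp.gcd_eq
    unfold Nat.Coprime
    rw [this]
    exact (Nat.coprime_comm.mp hap)
  have hcq' : Nat.Coprime c q := by
    have := hcq.gcd_eq
    unfold Nat.Coprime
    rw [this]
    exact (Nat.coprime_comm.mp hbq)
  have hcpq : Nat.Coprime c (p * q) := Nat.Coprime.mul_right hcp' hcq'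
  have hpq0 : NeZero (p * q) := ⟨by positivity⟩
  have hu : IsUnit ((c : ℕ) : ZMod (p * q)) := (ZMod.isUnit_iff_coprime c (p * q)).mpr hcpq
  have hdvd : p * q ∣ n := ⟨l, hn⟩
  obtain ⟨v, hv⟩ := ZMod.unitsMap_surjective hdvd hu.unit
  set t := (v : ZMod n).val with htdef
  have hco : Nat.Coprime t n := ZMod.val_coe_unit_coprime v
  have ht : ((t : ℕ) : ZMod (p * q)) = ((c : ℕ) : ZMod (p * q)) := by
    have h1 : (ZMod.castHom hdvd (ZMod (p * q))) (v : ZMod n) = ((c : ℕ) : ZMod (p * q)) := by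
      have := congrArg (Units.val) hv
      simpa [ZMod.unitsMap_def] using this
    rw [← h1, ZMod.castHom_apply, ZMod.natCast_val]
  have htc : t ≡ c [MOD p * q] := (ZMod.natCast_eq_natCast_iff _ _ _).mp ht
  have hta : t ≡ a [MOD p] := (htc.of_dvd ⟨q, rfl⟩).trans hcp
  have htb : t ≡ b [MOD q] := (htc.of_dvd ⟨p, mul_comm p q⟩).trans hcq
  refine ⟨(t : ℤ), by rw [Int.gcd_natCast_natCast]; exact hco, ?_, ?_⟩
  · rw [hla]
    have : ((t : ℤ) * q * l : ℤ) = ((t * (q * l) : ℕ) : ℤ) := by push_cast; ring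
    rw [this, Int.cast_natCast]
    rw [ZMod.natCast_eq_natCast_iff]
    have := (hta.mul_right' (c := q * l)).symm
    rwa [hn, mul_assoc]
  · rw [hmb]
    have : ((t : ℤ) * p * l : ℤ) = ((t * (p * l) : ℕ) : ℤ) := by push_cast; ring
    rw [this, Int.cast_natCast]
    rw [ZMod.natCast_eq_natCast_iff]
    have h2 := (htb.mul_right' (c := p * l)).symm
    have hn' : n = q * (p * l) := by rw [hn]; ring
    rwa [hn']
end

section
/- Let p, q be coprime positive integers with p odd, let l be a positive integer divisible by 4, set n = p·q·l, and let m₀ be a positive integer with gcd(m₀, p) = 1. Then there exists a positive integer k satisfying k ≡ q·m₀ (mod p), k ≡ p (mod 2q), and gcd(k, n) = 1. -/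
lemma gcd_eq_of_modEq {a b m : ℕ} (h : a ≡ b [MOD m]) :
    Nat.gcd a m = Nat.gcd b m := by
  rw [Nat.gcd_comm a m, Nat.gcd_rec, h, ← Nat.gcd_rec, Nat.gcd_comm]

theorem stmt_10 (p q l : ℕ) (hp : 0 < p) (hq : 0 < q) (hpq : Nat.gcd p q = 1)
    (hpodd : Odd p) (hl : 0 < l) (h4 : 4 ∣ l) (n : ℕ) (hn : n = p * q * l)
    (m₀ : ℕ) (hm₀ : 0 < m₀) (hm₀p : Nat.gcd m₀ p = 1) :
    ∃ k : ℕ, 0 < k ∧ k ≡ q * m₀ [MOD p] ∧ k ≡ p [MOD 2 * q] ∧ Nat.gcd k n = 1 := by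
  have h2 : Nat.Coprime p 2 := Nat.coprime_two_right.mpr hpodd
  have hp2q : Nat.Coprime p (2 * q) := Nat.Coprime.mul_right h2 hpq
  obtain ⟨a, ha1, ha2⟩ := Nat.chineseRemainder hp2q (q * m₀) p
  -- a coprime to p and to 2q
  have haq : Nat.Coprime (q * m₀) p :=
    Nat.Coprime.mul (Nat.coprime_comm.mp hpq) (hm₀p)
  have hap : Nat.Coprime a p := by
    have := gcd_eq_of_modEq ha1
    unfold Nat.Coprime; rw [this]; exact haq
  have ha2q : Nat.Coprime a (2 * q) := by
    have := gcd_eq_of_modEq ha2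
    unfold Nat.Coprime; rw [this]; exact hp2q
  have haM : Nat.Coprime a (p * (2 * q)) := Nat.Coprime.mul_right hap ha2q
  set M := p * (2 * q) with hM
  have hMpos : 0 < M := by positivity
  set b := ∏ r ∈ n.primeFactors.filter (fun r => ¬ r ∣ a), r with hb
  have hbpos : 0 < b := by
    apply Finset.prod_pos
    intro r hr
    exact (Nat.prime_of_mem_primeFactors (Finset.mem_filter.mp hr).1).pos
  refine ⟨a + M * b, by positivity, ?_, ?_, ?_⟩
  · have hd : p ∣ M * b := Dvd.dvd.mul_right ⟨2 * q, rfl⟩ b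
    calc a + M * b ≡ a + 0 [MOD p] :=
          Nat.ModEq.add_left a ((Nat.modEq_zero_iff_dvd).mpr hd)
      _ = a := by rw [add_zero]
      _ ≡ q * m₀ [MOD p] := ha1
  · have hd : (2 * q) ∣ M * b := Dvd.dvd.mul_right ⟨p, mul_comm _ _⟩ b
    calc a + M * b ≡ a + 0 [MOD 2 * q] :=
          Nat.ModEq.add_left a ((Nat.modEq_zero_iff_dvd).mpr hd)
      _ = a := by rw [add_zero]
      _ ≡ p [MOD 2 * q] := ha2
  · by_contra hg
    set g := Nat.gcd (a + M * b) n with hgdef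
    have hnpos : 0 < n := by rw [hn]; positivity
    have hgpos : 0 < g := Nat.gcd_pos_of_pos_right _ hnpos
    have hg1 : g ≠ 1 := hg
    set r := g.minFac with hr
    have hrprime : r.Prime := Nat.minFac_prime hg1
    have hrk : r ∣ a + M * b := (Nat.minFac_dvd g).trans (Nat.gcd_dvd_left _ _)
    have hrn : r ∣ n := (Nat.minFac_dvd g).trans (Nat.gcd_dvd_right _ _)
    by_cases hra : r ∣ a
    · have hrMb : r ∣ M * b := (Nat.dvd_add_right hra).mp hrk
      rcases hrprime.dvd_mul.mp hrMb with hrM | hrb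
      · exact hrprime.one_lt.ne' (Nat.eq_one_of_dvd_coprimes haM hra hrM)
      · obtain ⟨s, hs, hrs⟩ := (Prime.dvd_finset_prod_iff hrprime.prime _).mp hrb
        obtain ⟨hs1, hs2⟩ := Finset.mem_filter.mp hs
        have : r = s := ((Nat.prime_of_mem_primeFactors hs1).eq_one_or_self_of_dvd r hrs).resolve_left hrprime.one_lt.ne'
        exact hs2 (this ▸ hra)
    · have hrmem : r ∈ n.primeFactors.filter (fun r => ¬ r ∣ a) := by
        refine Finset.mem_filter.mpr ⟨?_, hra⟩
        exact Nat.mem_primeFactors.mpr ⟨hrprime, hrn, hnpos.ne'⟩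
      have hrb : r ∣ b := Finset.dvd_prod_of_mem _ hrmem
      have : r ∣ a := (Nat.dvd_add_iff_left (hrb.mul_left M)).mpr hrk
      exact hra this
end
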